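/- (Barenblatt solutions, singular supercritical case.) Let N ≥ 1, 2N/(N + 1) < p < 2, M > 0 and set λ = N(p − 2) + p, which is positive. There exist constants a, b > 0, depending only on N and p, such that the function B(x, t) := t^{−N/λ}·[ a·M^{p(p−2)/(λ(p−1))} + b·(‖x‖·t^{−1/λ})^{p/(p−1)} ]^{(p−1)/(p−2)} on ℝ^N × (0, ∞) satisfies: (i) at every point (x, t) with t > 0 and x ≠ 0, the identity ∂_t B(x, t) = div_x(‖∇_x B(x,t)‖^{p−2}·∇_x B(x,t)) holds pointwise (the spatial flux field being differentiable there); and (ii) for every bounded continuous φ : ℝ^N → ℝ, ∫_{ℝ^N} B(x, t)·φ(x) dx → M·φ(0) as t → 0⁺. -/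

import Mathlib

open MeasureTheory Filter Set Real

/-- The divergence of a vector field `F : ℝ^N → ℝ^N` at `x`: the trace of its Jacobian. -/
noncomputable def divergence {N : ℕ}
    (F : EuclideanSpace ℝ (Fin N) → EuclideanSpace ℝ (Fin N))
    (x : EuclideanSpace ℝ (Fin N)) : ℝ :=
  ∑ i, fderiv ℝ F x (EuclideanSpace.single i 1) i

/-- The `p`-Laplacian flux `‖∇f‖^{p-2} ∇f` of a scalar function `f : ℝ^N → ℝ`. -/
noncomputable def pFlux {N : ℕ} (p : ℝ) (f : EuclideanSpace ℝ (Fin N) → ℝ)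
    (y : EuclideanSpace ℝ (Fin N)) : EuclideanSpace ℝ (Fin N) :=
  ‖gradient f y‖ ^ (p - 2) • gradient f y

/-- The Barenblatt profile in the singular supercritical case `2N/(N+1) < p < 2`, with
parameters `a, b, M` and `λ = N(p-2) + p`. -/
noncomputable def barenblattSing (N : ℕ) (p a b M : ℝ)
    (x : EuclideanSpace ℝ (Fin N)) (t : ℝ) : ℝ :=
  t ^ (-(N : ℝ) / ((N : ℝ) * (p - 2) + p)) *
    (a * M ^ (p * (p - 2) / (((N : ℝ) * (p - 2) + p) * (p - 1))) +
        b * (‖x‖ * t ^ ((-1 : ℝ) / ((N : ℝ) * (p - 2) + p))) ^ (p / (p - 1))) ^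
      ((p - 1) / (p - 2))

lemma euclid_sum_sq {N : ℕ} (x : EuclideanSpace ℝ (Fin N)) : ∑ i, x i * x i = ‖x‖ ^ 2 := by
  rw [EuclideanSpace.norm_eq, Real.sq_sqrt (by positivity)]
  simp [sq]

lemma hasGradientAt_radial {N : ℕ} {g : ℝ → ℝ} {g' : ℝ} (x : EuclideanSpace ℝ (Fin N))
    (hg : HasDerivAt g g' (‖x‖ ^ 2)) :
    HasGradientAt (fun z => g (‖z‖ ^ 2)) ((2 * g') • x) x := by
  have h1 : HasFDerivAt (fun z : EuclideanSpace ℝ (Fin N) => ‖z‖ ^ 2)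
      (2 • (innerSL ℝ x)) x := (hasStrictFDerivAt_norm_sq x).hasFDerivAt
  have h2 := hg.comp_hasFDerivAt x h1
  rw [hasGradientAt_iff_hasFDerivAt]
  refine h2.congr_fderiv ?_
  ext v
  simp [InnerProductSpace.toDual_apply_apply, inner_smul_left, real_inner_smul_left, two_smul]
  ring

lemma radial_field_hasFDerivAt {N : ℕ} {ψ : ℝ → ℝ} {ψ' : ℝ} (x : EuclideanSpace ℝ (Fin N))
    (hψ : HasDerivAt ψ ψ' (‖x‖ ^ 2)) :
    HasFDerivAt (fun z : EuclideanSpace ℝ (Fin N) => ψ (‖z‖ ^ 2) • z)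
      ((ψ' • (2 • (innerSL ℝ x))).smulRight x + ψ (‖x‖ ^ 2) • ContinuousLinearMap.id ℝ _) x := by
  have h1 : HasFDerivAt (fun z : EuclideanSpace ℝ (Fin N) => ‖z‖ ^ 2)
      (2 • (innerSL ℝ x)) x := (hasStrictFDerivAt_norm_sq x).hasFDerivAt
  have h2 : HasFDerivAt (fun z : EuclideanSpace ℝ (Fin N) => ψ (‖z‖ ^ 2))
      (ψ' • (2 • (innerSL ℝ x))) x := hψ.comp_hasFDerivAt x h1
  have h3 := h2.smul (hasFDerivAt_id x)
  refine h3.congr_fderiv ?_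
  ext v i
  simp [ContinuousLinearMap.smulRight_apply]
  ring

lemma divergence_radial {N : ℕ} {F : EuclideanSpace ℝ (Fin N) → EuclideanSpace ℝ (Fin N)}
    {ψ : ℝ → ℝ} {ψ' : ℝ} {x : EuclideanSpace ℝ (Fin N)}
    (hF : F =ᶠ[nhds x] fun z => ψ (‖z‖ ^ 2) • z) (hψ : HasDerivAt ψ ψ' (‖x‖ ^ 2)) :
    DifferentiableAt ℝ F x ∧
      divergence F x = (N : ℝ) * ψ (‖x‖ ^ 2) + 2 * ‖x‖ ^ 2 * ψ' := by
  have hR := radial_field_hasFDerivAt x hψ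
  refine ⟨hR.differentiableAt.congr_of_eventuallyEq hF, ?_⟩
  have hfd : fderiv ℝ F x = fderiv ℝ (fun z => ψ (‖z‖ ^ 2) • z) x := hF.fderiv_eq
  rw [divergence, hfd, hR.fderiv]
  have key : ∀ i, (((ψ' • (2 • (innerSL ℝ x))).smulRight x
      + ψ (‖x‖ ^ 2) • ContinuousLinearMap.id ℝ (EuclideanSpace ℝ (Fin N)))
        (EuclideanSpace.single i 1)) i
      = 2 * ψ' * (x i * x i) + ψ (‖x‖ ^ 2) * (EuclideanSpace.single i (1:ℝ)) i := by
    intro i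
    simp [ContinuousLinearMap.smulRight_apply, EuclideanSpace.inner_single_right,
      EuclideanSpace.single_apply]
    ring
  rw [Finset.sum_congr rfl fun i _ => key i, Finset.sum_add_distrib, ← Finset.mul_sum,
    ← Finset.mul_sum, euclid_sum_sq]
  simp [EuclideanSpace.single_apply]
  ring

/-- radial profile in the variable `s = ‖z‖²` -/
noncomputable def gFun (c b q m av bv t : ℝ) : ℝ → ℝ :=
  fun s => t ^ (-av) * (c + b * s ^ (q/2) * t ^ (-(bv*q))) ^ m

/-- its derivative -/
noncomputable def GFun (c b q m av bv t : ℝ) : ℝ → ℝ :=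
  fun s => t ^ (-av) * (m * (c + b * s ^ (q/2) * t ^ (-(bv*q))) ^ (m-1) *
    (b * ((q/2) * s ^ (q/2-1)) * t ^ (-(bv*q))))

/-- the radial flux profile -/
noncomputable def psiFun (K c b q m bv t : ℝ) : ℝ → ℝ :=
  fun s => -K * (c + b * s ^ (q/2) * t ^ (-(bv*q))) ^ m

lemma hasDerivAt_inner_profile (c b T e m C : ℝ) {s : ℝ} (hs : 0 < s)
    (hv : 0 < c + b * s ^ e * T) :
    HasDerivAt (fun s : ℝ => C * (c + b * s ^ e * T) ^ m)
      (C * (m * (c + b * s ^ e * T) ^ (m - 1) * (b * (e * s ^ (e - 1)) * T))) s := by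
  have h1 : HasDerivAt (fun s : ℝ => s ^ e) (e * s ^ (e - 1)) s :=
    Real.hasDerivAt_rpow_const (Or.inl hs.ne')
  have h2 : HasDerivAt (fun s : ℝ => c + b * s ^ e * T)
      (b * (e * s ^ (e - 1)) * T) s := by
    have := ((h1.const_mul b).mul_const T).const_add c
    convert this using 1
  have h3 : HasDerivAt (fun w : ℝ => w ^ m) (m * (c + b * s ^ e * T) ^ (m - 1))
      (c + b * s ^ e * T) := Real.hasDerivAt_rpow_const (Or.inl hv.ne')
  exact (h3.comp s h2).const_mul C

lemma vpos {c b q bv t : ℝ} (hc : 0 < c) (hb : 0 < b) (ht : 0 < t) {s : ℝ} (hs : 0 < s) :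
    0 < c + b * s ^ (q/2) * t ^ (-(bv*q)) := by positivity

lemma gFun_hasDerivAt {c b q m av bv t : ℝ} (hc : 0 < c) (hb : 0 < b) (ht : 0 < t)
    {s : ℝ} (hs : 0 < s) :
    HasDerivAt (gFun c b q m av bv t) (GFun c b q m av bv t s) s :=
  hasDerivAt_inner_profile c b _ _ m _ hs (vpos hc hb ht hs)

lemma psiFun_hasDerivAt {K c b q m bv t : ℝ} (hc : 0 < c) (hb : 0 < b) (ht : 0 < t)
    {s : ℝ} (hs : 0 < s) :
    HasDerivAt (psiFun K c b q m bv t)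
      (-K * (m * (c + b * s ^ (q/2) * t ^ (-(bv*q))) ^ (m-1) *
        (b * ((q/2) * s ^ (q/2-1)) * t ^ (-(bv*q))))) s :=
  hasDerivAt_inner_profile c b _ _ m _ hs (vpos hc hb ht hs)

lemma GFun_neg {c b q m av bv t : ℝ} (hc : 0 < c) (hb : 0 < b) (ht : 0 < t) (hm : m < 0)
    (hq : 0 < q) {s : ℝ} (hs : 0 < s) : GFun c b q m av bv t s < 0 := by
  have h1 : (0:ℝ) < (c + b * s ^ (q/2) * t ^ (-(bv*q))) ^ (m-1) :=
    Real.rpow_pos_of_pos (vpos hc hb ht hs) _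
  have h2 : (0:ℝ) < b * ((q/2) * s ^ (q/2-1)) * t ^ (-(bv*q)) := by positivity
  have h3 : (0:ℝ) < t ^ (-av) := Real.rpow_pos_of_pos ht _
  simp only [GFun]
  have := mul_neg_of_neg_of_pos (mul_neg_of_neg_of_pos hm h1) h2
  exact mul_neg_of_pos_of_neg h3 this

lemma scalar_identity {p c b q m av bv t : ℝ}
    (hp1 : 1 < p) (hp2 : p < 2) (hq : q = p / (p-1)) (hm : m = (p-1)/(p-2))
    (hc : 0 < c) (hb : 0 < b) (ht : 0 < t) {r : ℝ} (hr : 0 < r) :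
    ((-(2 * GFun c b q m av bv t (r^2))) * r) ^ (p-2) * (2 * GFun c b q m av bv t (r^2))
      = psiFun (((-m)*b*q*t^(-(av+bv*q)))^(p-1)) c b q m bv t (r^2) := by
  have hp1' : (0:ℝ) < p - 1 := by linarith
  have hp2' : (0:ℝ) < 2 - p := by linarith
  have hqpos : 0 < q := by rw [hq]; positivity
  have hmneg : m < 0 := by rw [hm]; apply div_neg_of_pos_of_neg <;> linarith
  have hm' : 0 < -m := by linarith
  have hs : (0:ℝ) < r^2 := by positivity
  set v : ℝ := c + b * (r^2) ^ (q/2) * t ^ (-(bv*q)) with hv_def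
  have hv : 0 < v := by rw [hv_def]; positivity
  set P : ℝ := v ^ (m-1) with hP_def
  have hP : 0 < P := Real.rpow_pos_of_pos hv _
  set W : ℝ := t ^ (-(av+bv*q)) with hW_def
  have hWpos : 0 < W := Real.rpow_pos_of_pos ht _
  have hW : W = t ^ (-av) * t ^ (-(bv*q)) := by
    rw [hW_def, show -(av+bv*q) = -av + -(bv*q) by ring, Real.rpow_add ht]
  set A : ℝ := ((-m)*b*q*W) * (P * (r^2) ^ (q/2-1)) with hA_def
  have hApos : 0 < A := by
    rw [hA_def]
    have h1 : 0 < (r^2) ^ (q/2-1) := Real.rpow_pos_of_pos hs _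
    positivity
  have h2G : 2 * GFun c b q m av bv t (r^2) = -A := by
    simp only [GFun, hA_def, hW]
    ring
  rw [h2G, neg_neg]
  have hmul : (A * r) ^ (p-2) = A ^ (p-2) * r ^ (p-2) := Real.mul_rpow hApos.le hr.le
  have hAp : A ^ (p-2) * A = A ^ (p-1) := by
    rw [show p-1 = (p-2)+1 by ring, Real.rpow_add_one hApos.ne']
  have hApow : A ^ (p-1) = ((-m)*b*q*W)^(p-1) * (P ^ (p-1) * ((r^2) ^ (q/2-1)) ^ (p-1)) := by
    rw [hA_def, Real.mul_rpow (by positivity) (by positivity),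
      Real.mul_rpow hP.le (by positivity)]
  have hPp : P ^ (p-1) = v ^ m := by
    rw [hP_def, ← Real.rpow_mul hv.le]
    congr 1
    rw [hm]
    have : p - 2 ≠ 0 := by linarith
    field_simp
    norm_num
  have hrp : ((r^2) ^ (q/2-1)) ^ (p-1) * r ^ (p-2) = 1 := by
    have h2 : (r^2 : ℝ) = r ^ (2:ℝ) := by
      rw [← Real.rpow_natCast r 2]; norm_num
    rw [h2, ← Real.rpow_mul hr.le, ← Real.rpow_mul hr.le, ← Real.rpow_add hr]
    rw [show 2 * (q/2-1) * (p-1) + (p-2) = (q - 2) * (p-1) + (p-2) by ring]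
    rw [hq]
    rw [show (p/(p-1) - 2) * (p-1) + (p-2) = (0:ℝ) from by field_simp; ring]
    exact Real.rpow_zero r
  calc (A * r) ^ (p-2) * (-A) = -(A ^ (p-2) * A * r ^ (p-2)) := by rw [hmul]; ring
    _ = -(A ^ (p-1) * r ^ (p-2)) := by rw [hAp]
    _ = -(((-m)*b*q*W)^(p-1) * v ^ m * (((r^2) ^ (q/2-1)) ^ (p-1) * r ^ (p-2))) := by
        rw [hApow, hPp]; ring
    _ = -(((-m)*b*q*W)^(p-1)) * v ^ m := by rw [hrp]; ring
    _ = psiFun (((-m)*b*q*t^(-(av+bv*q)))^(p-1)) c b q m bv t (r^2) := by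
        simp only [psiFun, hW_def, hv_def]
lemma param_facts (N : ℕ) (hN : 1 ≤ N) (p : ℝ)
    (hp₁ : 2 * (N : ℝ) / ((N : ℝ) + 1) < p) (hp₂ : p < 2) :
    1 < p ∧ 0 < (N : ℝ) * (p - 2) + p := by
  have hN1 : (1 : ℝ) ≤ (N : ℝ) := by exact_mod_cast hN
  have hNpos : (0 : ℝ) < (N : ℝ) + 1 := by linarith
  have h1 : 2 * (N : ℝ) < p * ((N : ℝ) + 1) := by
    rw [div_lt_iff₀ hNpos] at hp₁; linarith
  exact ⟨by nlinarith, by nlinarith⟩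

lemma pde_main (N : ℕ) (hN : 1 ≤ N) (p : ℝ)
    (hp₁ : 2 * (N : ℝ) / ((N : ℝ) + 1) < p) (hp₂ : p < 2)
    (c : ℝ) (hc : 0 < c) (b : ℝ)
    (hb : b = (2 - p) / p * ((N : ℝ) * (p - 2) + p) ^ (-(1 : ℝ) / (p - 1)))
    (x : EuclideanSpace ℝ (Fin N)) (t : ℝ) (ht : 0 < t) (hx : x ≠ 0) :
    DifferentiableAt ℝ (pFlux p (fun z => t ^ (-(N : ℝ) / ((N : ℝ) * (p - 2) + p)) *
        (c + b * (‖z‖ * t ^ ((-1 : ℝ) / ((N : ℝ) * (p - 2) + p))) ^ (p / (p - 1))) ^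
          ((p - 1) / (p - 2)))) x ∧
      deriv (fun s => s ^ (-(N : ℝ) / ((N : ℝ) * (p - 2) + p)) *
        (c + b * (‖x‖ * s ^ ((-1 : ℝ) / ((N : ℝ) * (p - 2) + p))) ^ (p / (p - 1))) ^
          ((p - 1) / (p - 2))) t =
      divergence (pFlux p (fun z => t ^ (-(N : ℝ) / ((N : ℝ) * (p - 2) + p)) *
        (c + b * (‖z‖ * t ^ ((-1 : ℝ) / ((N : ℝ) * (p - 2) + p))) ^ (p / (p - 1))) ^
          ((p - 1) / (p - 2)))) x := by
  obtain ⟨hp1, hlam⟩ := param_facts N hN p hp₁ hp₂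
  set lam : ℝ := (N : ℝ) * (p - 2) + p with hlam_def
  have hp1' : (0:ℝ) < p - 1 := by linarith
  have hp2' : (0:ℝ) < 2 - p := by linarith
  have hppos : (0:ℝ) < p := by linarith
  rw [show (-(N : ℝ) / lam) = -((N : ℝ) / lam) by ring,
    show ((-1 : ℝ) / lam) = -(1 / lam) by ring]
  set av : ℝ := (N : ℝ) / lam with hav_def
  set bv : ℝ := 1 / lam with hbv_def
  set q : ℝ := p / (p - 1) with hq_def
  set m : ℝ := (p - 1) / (p - 2) with hm_def
  have hqpos : 0 < q := by rw [hq_def]; positivity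
  have hmneg : m < 0 := by
    rw [hm_def]; apply div_neg_of_pos_of_neg <;> linarith
  have hbpos : 0 < b := by
    rw [hb]
    have : (0:ℝ) < lam ^ (-(1:ℝ)/(p-1)) := Real.rpow_pos_of_pos hlam _
    positivity
  have hr : 0 < ‖x‖ := norm_pos_iff.mpr hx
  have hs₀ : (0:ℝ) < ‖x‖ ^ 2 := by positivity
  set K : ℝ := ((-m) * b * q * t ^ (-(av + bv * q))) ^ (p - 1) with hK_def
  -- rewrite of the inner power
  have h_pow : ∀ z : EuclideanSpace ℝ (Fin N),
      (‖z‖ * t ^ (-bv)) ^ q = (‖z‖ ^ 2) ^ (q/2) * t ^ (-(bv*q)) := by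
    intro z
    rw [Real.mul_rpow (norm_nonneg z) (Real.rpow_nonneg ht.le _)]
    congr 1
    · rw [show ((‖z‖:ℝ) ^ 2) = ‖z‖ ^ (2:ℝ) by
        rw [← Real.rpow_natCast ‖z‖ 2]; norm_num,
        ← Real.rpow_mul (norm_nonneg z)]
      congr 1; ring
    · rw [← Real.rpow_mul ht.le]; congr 1; ring
  -- the spatial function is radial
  have h_feq : (fun z : EuclideanSpace ℝ (Fin N) =>
      t ^ (-av) * (c + b * (‖z‖ * t ^ (-bv)) ^ q) ^ m)
      = fun z => gFun c b q m av bv t (‖z‖ ^ 2) := by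
    funext z
    simp only [gFun]
    rw [h_pow z, show c + b * ((‖z‖ ^ 2) ^ (q/2) * t ^ (-(bv*q)))
      = c + b * (‖z‖ ^ 2) ^ (q/2) * t ^ (-(bv*q)) by ring]
  -- gradient
  have h_grad : ∀ z : EuclideanSpace ℝ (Fin N), z ≠ 0 →
      HasGradientAt (fun z : EuclideanSpace ℝ (Fin N) =>
        t ^ (-av) * (c + b * (‖z‖ * t ^ (-bv)) ^ q) ^ m)
        ((2 * GFun c b q m av bv t (‖z‖ ^ 2)) • z) z := by
    intro z hz
    have hz2 : (0:ℝ) < ‖z‖ ^ 2 := by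
      have := norm_pos_iff.mpr hz; positivity
    rw [h_feq]
    exact hasGradientAt_radial z (gFun_hasDerivAt hc hbpos ht hz2)
  -- flux is eventually radial
  have h_flux : pFlux p (fun z : EuclideanSpace ℝ (Fin N) =>
      t ^ (-av) * (c + b * (‖z‖ * t ^ (-bv)) ^ q) ^ m)
      =ᶠ[nhds x] fun z => psiFun K c b q m bv t (‖z‖ ^ 2) • z := by
    filter_upwards [isOpen_compl_singleton.mem_nhds hx] with z hz
    replace hz : z ≠ 0 := hz
    have hz2 : (0:ℝ) < ‖z‖ ^ 2 := by
      have := norm_pos_iff.mpr hz; positivity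
    have hgr := (h_grad z hz).gradient
    have hGneg : GFun c b q m av bv t (‖z‖ ^ 2) < 0 :=
      GFun_neg hc hbpos ht hmneg hqpos hz2
    simp only [pFlux]
    rw [hgr, norm_smul, Real.norm_eq_abs, abs_of_neg (by linarith : 2 * GFun c b q m av bv t (‖z‖ ^ 2) < 0), smul_smul]
    congr 1
    rw [hK_def]
    exact scalar_identity hp1 hp₂ hq_def hm_def hc hbpos ht (norm_pos_iff.mpr hz)
  -- divergence
  have hψd := psiFun_hasDerivAt (K := K) (q := q) (m := m) (bv := bv) hc hbpos ht hs₀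
  have hdiv := divergence_radial h_flux hψd
  refine ⟨hdiv.1, ?_⟩
  -- time derivative
  have hrt : (0:ℝ) < ‖x‖ * t ^ (-bv) := by positivity
  have hw₀ : (0:ℝ) < c + b * (‖x‖ * t ^ (-bv)) ^ q := by positivity
  have h5 : HasDerivAt (fun τ : ℝ => τ ^ (-bv)) ((-bv) * t ^ (-bv - 1)) t :=
    Real.hasDerivAt_rpow_const (Or.inl ht.ne')
  have h6 := h5.const_mul ‖x‖
  have h7 : HasDerivAt (fun w : ℝ => w ^ q) (q * (‖x‖ * t ^ (-bv)) ^ (q - 1))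
      (‖x‖ * t ^ (-bv)) := Real.hasDerivAt_rpow_const (Or.inl hrt.ne')
  have h8 := ((h7.comp t h6).const_mul b).const_add c
  have h9 : HasDerivAt (fun w : ℝ => w ^ m)
      (m * (c + b * (‖x‖ * t ^ (-bv)) ^ q) ^ (m - 1))
      (c + b * (‖x‖ * t ^ (-bv)) ^ q) := Real.hasDerivAt_rpow_const (Or.inl hw₀.ne')
  have h10 := h9.comp t h8
  have h11 : HasDerivAt (fun τ : ℝ => τ ^ (-av)) ((-av) * t ^ (-av - 1)) t :=
    Real.hasDerivAt_rpow_const (Or.inl ht.ne')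
  have h12 := h11.mul h10
  have h12' : HasDerivAt (fun s : ℝ => s ^ (-av) * (c + b * (‖x‖ * s ^ (-bv)) ^ q) ^ m)
      ((-av) * t ^ (-av - 1) * (c + b * (‖x‖ * t ^ (-bv)) ^ q) ^ m +
        t ^ (-av) * ((m * (c + b * (‖x‖ * t ^ (-bv)) ^ q) ^ (m - 1)) *
          (b * (q * (‖x‖ * t ^ (-bv)) ^ (q - 1) * (‖x‖ * ((-bv) * t ^ (-bv - 1))))))) t := h12
  rw [h12'.deriv, hdiv.2]
  simp only [psiFun]
  rw [h_pow x, show c + b * ((‖x‖ ^ 2) ^ (q/2) * t ^ (-(bv*q)))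
      = c + b * (‖x‖ ^ 2) ^ (q/2) * t ^ (-(bv*q)) by ring]
  -- auxiliary scalar identities
  have e1 : (‖x‖ * t ^ (-bv)) ^ (q-1) = ‖x‖ ^ (q-1) * t ^ (-bv*(q-1)) := by
    rw [Real.mul_rpow (norm_nonneg x) (Real.rpow_nonneg ht.le _), ← Real.rpow_mul ht.le]
  have e2 : ‖x‖ ^ (q-1) * ‖x‖ = (‖x‖ ^ 2) ^ (q/2) := by
    rw [← Real.rpow_add_one hr.ne' (q-1),
      show ((‖x‖:ℝ) ^ 2) = ‖x‖ ^ (2:ℝ) by rw [← Real.rpow_natCast ‖x‖ 2]; norm_num,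
      ← Real.rpow_mul (norm_nonneg x)]
    congr 1; ring
  have e3 : t ^ (-bv*(q-1)) = t ^ (-(bv*q)) * t ^ bv := by
    rw [← Real.rpow_add ht]; congr 1; ring
  have h_term : b * (q * (‖x‖ * t ^ (-bv)) ^ (q - 1) * (‖x‖ * (-bv * t ^ (-bv - 1))))
      = b * ((‖x‖ ^ 2) ^ (q/2) * t ^ (-(bv*q))) * (-bv * (t ^ bv * t ^ (-bv - 1))) * q := by
    rw [e1, e3]
    linear_combination (b * q * (t ^ (-(bv*q)) * t ^ bv) * (-bv * t ^ (-bv-1))) * e2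
  rw [h_term]
  have h_tc : t ^ (-av) * (t ^ bv * t ^ (-bv - 1)) = t ^ (-av - 1) := by
    rw [← Real.rpow_add ht, ← Real.rpow_add ht]; congr 1; ring
  have h_s : ‖x‖ ^ 2 * (‖x‖ ^ 2) ^ (q/2 - 1) = (‖x‖ ^ 2) ^ (q/2) := by
    nth_rewrite 1 [← Real.rpow_one (‖x‖ ^ 2 : ℝ)]
    rw [← Real.rpow_add hs₀]; congr 1; ring
  have hK : K = lam⁻¹ * t ^ (-av - 1) := by
    have hne2 : p - 2 ≠ 0 := by linarith
    have h_mbq : -m * b * q = lam ^ (-(1:ℝ)/(p-1)) := by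
      rw [hm_def, hq_def, hb]
      field_simp
      ring
    have hLpos : (0:ℝ) < lam ^ (-(1:ℝ)/(p-1)) := Real.rpow_pos_of_pos hlam _
    rw [hK_def, h_mbq, Real.mul_rpow hLpos.le (Real.rpow_nonneg ht.le _),
      ← Real.rpow_mul hlam.le, ← Real.rpow_mul ht.le,
      show (-(1:ℝ)/(p-1)) * (p-1) = -1 by field_simp,
      show (-(av + bv * q)) * (p-1) = -av - 1 by
        rw [hav_def, hbv_def, hq_def]; field_simp; rw [hlam_def]; ring,
      Real.rpow_neg_one]
  rw [hK, ← h_tc, ← h_s]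
  rw [hav_def, hbv_def]
  field_simp

lemma profile_continuous {N : ℕ} {c b q m : ℝ} (hc : 0 < c) (hb : 0 < b) (hq : 0 < q) :
    Continuous (fun y : EuclideanSpace ℝ (Fin N) => (c + b * ‖y‖ ^ q) ^ m) := by
  apply Continuous.rpow_const
  · exact continuous_const.add (continuous_const.mul (continuous_norm.rpow_const (fun y => Or.inr hq.le)))
  · intro y
    left
    have : (0:ℝ) < c + b * ‖y‖ ^ q := by positivity
    exact this.ne'

lemma profile_integrable (N : ℕ) (hN : 1 ≤ N) (p : ℝ)
    (hp₁ : 2 * (N : ℝ) / ((N : ℝ) + 1) < p) (hp₂ : p < 2)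
    {c b : ℝ} (hc : 0 < c) (hb : 0 < b) :
    Integrable (fun y : EuclideanSpace ℝ (Fin N) =>
      (c + b * ‖y‖ ^ (p / (p-1))) ^ ((p-1)/(p-2))) := by
  have hN1 : (1 : ℝ) ≤ (N : ℝ) := by exact_mod_cast hN
  have hNpos : (0 : ℝ) < (N : ℝ) + 1 := by linarith
  have h1 : 2 * (N : ℝ) < p * ((N : ℝ) + 1) := by
    rw [div_lt_iff₀ hNpos] at hp₁; linarith
  have hp1 : 1 < p := by nlinarith
  have hlam : 0 < (N:ℝ) * (p-2) + p := by nlinarith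
  have hp1' : (0:ℝ) < p - 1 := by linarith
  have hp2' : (0:ℝ) < 2 - p := by linarith
  set q : ℝ := p / (p-1) with hq_def
  set m : ℝ := (p-1)/(p-2) with hm_def
  have hqpos : 0 < q := by rw [hq_def]; positivity
  have hmneg : m < 0 := by rw [hm_def]; apply div_neg_of_pos_of_neg <;> linarith
  set ε : ℝ := min c b with hε_def
  have hε : 0 < ε := lt_min hc hb
  have hρ : (N : ℝ) < -(q * m) := by
    have : -(q*m) = p / (2-p) := by
      have h2 : p - 2 ≠ 0 := by linarith
      have h3 : (2:ℝ) - p ≠ 0 := by linarith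
      rw [hq_def, hm_def]
      field_simp
      ring
    rw [this, lt_div_iff₀ hp2']
    have h' : (N:ℝ)*(2-p) = -((N:ℝ)*(p-2)) := by ring
    linarith
  have hfin : (Module.finrank ℝ (EuclideanSpace ℝ (Fin N)) : ℝ) < -(q*m) := by
    rwa [finrank_euclideanSpace_fin]
  have hint := (integrable_one_add_norm (E := EuclideanSpace ℝ (Fin N))
    (μ := volume) hfin).const_mul (ε ^ m / 2 ^ (q*m))
  refine hint.mono' ((profile_continuous hc hb hqpos).aestronglyMeasurable) ?_
  refine Eventually.of_forall fun y => ?_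
  have hbase : (0:ℝ) < c + b * ‖y‖ ^ q := by positivity
  have hy1 : (0:ℝ) < 1 + ‖y‖ := by positivity
  have h2 : ((1 + ‖y‖)/2) ^ q ≤ 1 + ‖y‖ ^ q := by
    rcases le_or_gt ‖y‖ 1 with h | h
    · have : ((1 + ‖y‖)/2) ^ q ≤ 1 := by
        apply Real.rpow_le_one (by positivity) (by linarith) hqpos.le
      have h0 : (0:ℝ) ≤ ‖y‖ ^ q := Real.rpow_nonneg (norm_nonneg y) _
      linarith
    · have : ((1 + ‖y‖)/2) ^ q ≤ ‖y‖ ^ q := by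
        apply Real.rpow_le_rpow (by positivity) (by linarith) hqpos.le
      linarith
  have h3 : ε * ((1 + ‖y‖)/2) ^ q ≤ c + b * ‖y‖ ^ q := by
    have e1 : ε * ((1 + ‖y‖)/2) ^ q ≤ ε * (1 + ‖y‖ ^ q) := by
      apply mul_le_mul_of_nonneg_left h2 hε.le
    have e2 : ε * (1 + ‖y‖ ^ q) ≤ c + b * ‖y‖ ^ q := by
      have l1 : ε ≤ c := min_le_left _ _
      have l2 : ε ≤ b := min_le_right _ _
      have l3 : (0:ℝ) ≤ ‖y‖ ^ q := Real.rpow_nonneg (norm_nonneg y) _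
      nlinarith
    linarith
  have h4 : (c + b * ‖y‖ ^ q) ^ m ≤ (ε * ((1 + ‖y‖)/2) ^ q) ^ m :=
    Real.rpow_le_rpow_of_nonpos (by positivity) h3 hmneg.le
  have h5 : (ε * ((1 + ‖y‖)/2) ^ q) ^ m = ε ^ m / 2 ^ (q*m) * (1 + ‖y‖) ^ (q*m) := by
    rw [Real.mul_rpow hε.le (by positivity),
      ← Real.rpow_mul (by positivity : (0:ℝ) ≤ (1+‖y‖)/2),
      Real.div_rpow hy1.le (by norm_num : (0:ℝ) ≤ 2)]
    ring
  rw [neg_neg, Real.norm_eq_abs, abs_of_pos (Real.rpow_pos_of_pos hbase m)]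
  calc (c + b * ‖y‖ ^ q) ^ m ≤ (ε * ((1 + ‖y‖)/2) ^ q) ^ m := h4
    _ = ε ^ m / 2 ^ (q*m) * (1 + ‖y‖) ^ (q*m) := h5

noncomputable def I1 (N : ℕ) (p : ℝ) : ℝ :=
  ∫ z : EuclideanSpace ℝ (Fin N), (1 + 1 * ‖z‖ ^ (p / (p-1))) ^ ((p-1)/(p-2))

lemma profile_scaling (N : ℕ) (p : ℝ) (hp1 : 1 < p) (hp₂ : p < 2)
    {c b : ℝ} (hc : 0 < c) (hb : 0 < b) :
    (∫ y : EuclideanSpace ℝ (Fin N), (c + b * ‖y‖ ^ (p / (p-1))) ^ ((p-1)/(p-2)))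
      = ((c/b) ^ ((p-1)/p)) ^ (N : ℕ) * (c ^ ((p-1)/(p-2)) * I1 N p) := by
  have hp1' : (0:ℝ) < p - 1 := by linarith
  have hppos : (0:ℝ) < p := by linarith
  set q : ℝ := p / (p-1) with hq_def
  set m : ℝ := (p-1)/(p-2) with hm_def
  have hqpos : 0 < q := by rw [hq_def]; positivity
  set R : ℝ := (c/b) ^ ((p-1)/p) with hR_def
  have hR : 0 < R := Real.rpow_pos_of_pos (by positivity) _
  have h := Measure.integral_comp_smul_of_nonneg (volume)
    (fun y : EuclideanSpace ℝ (Fin N) => (c + b * ‖y‖ ^ q) ^ m) R (hR := hR.le)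
  rw [finrank_euclideanSpace_fin] at h
  have hRq : b * R ^ q = c := by
    rw [hR_def, ← Real.rpow_mul (by positivity : (0:ℝ) ≤ c/b),
      show (p-1)/p * q = 1 by rw [hq_def]; field_simp,
      Real.rpow_one]
    field_simp
  have hconv : ∀ z : EuclideanSpace ℝ (Fin N),
      (c + b * ‖R • z‖ ^ q) ^ m = c ^ m * (1 + 1 * ‖z‖ ^ q) ^ m := by
    intro z
    have h1 : ‖R • z‖ = R * ‖z‖ := by
      rw [norm_smul, Real.norm_eq_abs, abs_of_pos hR]
    rw [h1, Real.mul_rpow hR.le (norm_nonneg z),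
      show c + b * (R ^ q * ‖z‖ ^ q) = c * (1 + 1 * ‖z‖ ^ q) by
        rw [← hRq]; ring,
      Real.mul_rpow hc.le (by positivity)]
  simp only [hconv] at h
  rw [integral_const_mul] at h
  have : (∫ y : EuclideanSpace ℝ (Fin N), (c + b * ‖y‖ ^ q) ^ m)
      = (R ^ (N:ℕ)) * (c ^ m * ∫ z : EuclideanSpace ℝ (Fin N), (1 + 1 * ‖z‖ ^ q) ^ m) := by
    rw [h, smul_eq_mul, ← mul_assoc, mul_inv_cancel₀ (by positivity : (R:ℝ) ^ (N:ℕ) ≠ 0), one_mul]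
  rw [this, I1, hq_def, hm_def]

lemma I1_pos (N : ℕ) (hN : 1 ≤ N) (p : ℝ)
    (hp₁ : 2 * (N : ℝ) / ((N : ℝ) + 1) < p) (hp₂ : p < 2) : 0 < I1 N p := by
  have hint := profile_integrable N hN p hp₁ hp₂ (c := 1) (b := 1)
    one_pos one_pos
  have hp1 : 1 < p := (param_facts N hN p hp₁ hp₂).1
  have hp1' : (0:ℝ) < p - 1 := by linarith
  have hnonneg : ∀ y : EuclideanSpace ℝ (Fin N),
      0 ≤ (1 + 1 * ‖y‖ ^ (p / (p-1))) ^ ((p-1)/(p-2)) := by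
    intro y
    apply Real.rpow_nonneg
    positivity
  rw [I1]
  have hconv : (fun y : EuclideanSpace ℝ (Fin N) =>
      (1 + 1 * ‖y‖ ^ (p / (p-1))) ^ ((p-1)/(p-2)))
      = fun y : EuclideanSpace ℝ (Fin N) =>
      ((1:ℝ) + 1 * ‖y‖ ^ (p / (p-1))) ^ ((p-1)/(p-2)) := rfl
  rw [integral_pos_iff_support_of_nonneg hnonneg (by simpa using hint)]
  have hsupp : Function.support (fun y : EuclideanSpace ℝ (Fin N) =>
      (1 + 1 * ‖y‖ ^ (p / (p-1))) ^ ((p-1)/(p-2))) = univ := by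
    apply eq_univ_of_forall
    intro y
    have : (0:ℝ) < (1 + 1 * ‖y‖ ^ (p / (p-1))) ^ ((p-1)/(p-2)) :=
      Real.rpow_pos_of_pos (by positivity) _
    exact this.ne'
  rw [hsupp]
  exact isOpen_univ.measure_pos volume ⟨0, trivial⟩
lemma limit_main (N : ℕ) (hN : 1 ≤ N) (p : ℝ)
    (hp₁ : 2 * (N : ℝ) / ((N : ℝ) + 1) < p) (hp₂ : p < 2)
    (c b M : ℝ) (hc : 0 < c) (hb : 0 < b)
    (hmass : (∫ y : EuclideanSpace ℝ (Fin N), (c + b * ‖y‖ ^ (p / (p-1))) ^ ((p-1)/(p-2))) = M)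
    (φ : EuclideanSpace ℝ (Fin N) → ℝ) (hφ : Continuous φ) (K : ℝ) (hK : ∀ x, |φ x| ≤ K) :
    Tendsto (fun t => ∫ x : EuclideanSpace ℝ (Fin N),
        t ^ (-(N : ℝ) / ((N : ℝ) * (p - 2) + p)) *
          (c + b * (‖x‖ * t ^ ((-1 : ℝ) / ((N : ℝ) * (p - 2) + p))) ^ (p / (p - 1))) ^
            ((p - 1) / (p - 2)) * φ x)
      (nhdsWithin 0 (Ioi (0 : ℝ))) (nhds (M * φ 0)) := by
  obtain ⟨hp1, hlam⟩ := param_facts N hN p hp₁ hp₂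
  set lam : ℝ := (N : ℝ) * (p - 2) + p with hlam_def
  rw [show (-(N : ℝ) / lam) = -((N : ℝ) / lam) by ring,
    show ((-1 : ℝ) / lam) = -((1:ℝ)/lam) by ring]
  have hp1' : (0:ℝ) < p - 1 := by linarith
  have hp2' : (0:ℝ) < 2 - p := by linarith
  set q : ℝ := p / (p-1) with hq_def
  set m : ℝ := (p-1)/(p-2) with hm_def
  have hqpos : 0 < q := by rw [hq_def]; positivity
  set f₀ : EuclideanSpace ℝ (Fin N) → ℝ := fun y => (c + b * ‖y‖ ^ q) ^ m with hf₀_def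
  have hint : Integrable f₀ := profile_integrable N hN p hp₁ hp₂ hc hb
  have hcont : Continuous f₀ := profile_continuous hc hb hqpos
  have hf₀pos : ∀ y, 0 < f₀ y := fun y =>
    Real.rpow_pos_of_pos (by positivity) _
  have hbv : (0:ℝ) < 1/lam := by positivity
  -- change of variables for each positive t
  have h_cv : ∀ t : ℝ, 0 < t →
      (∫ x : EuclideanSpace ℝ (Fin N),
        t ^ (-((N : ℝ) / lam)) * (c + b * (‖x‖ * t ^ (-(1/lam))) ^ q) ^ m * φ x)
      = ∫ y, f₀ y * φ ((t ^ (1/lam)) • y) := by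
    intro t ht
    have hR : (0:ℝ) < t ^ (1/lam) := Real.rpow_pos_of_pos ht _
    have h := Measure.integral_comp_smul_of_nonneg (volume)
      (fun x : EuclideanSpace ℝ (Fin N) =>
        t ^ (-((N : ℝ) / lam)) * (c + b * (‖x‖ * t ^ (-(1/lam))) ^ q) ^ m * φ x)
      (t ^ (1/lam)) (hR := hR.le)
    rw [finrank_euclideanSpace_fin] at h
    have hcanc : ∀ y : EuclideanSpace ℝ (Fin N),
        ‖(t ^ (1/lam)) • y‖ * t ^ (-(1/lam)) = ‖y‖ := by
      intro y
      rw [norm_smul, Real.norm_eq_abs, abs_of_pos hR, mul_comm (t ^ (1/lam)) ‖y‖,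
        mul_assoc, ← Real.rpow_add ht]
      simp
    simp only [hcanc] at h
    -- h : ∫ y, t^(-av) * f₀ y * φ (R • y) = (R^N)⁻¹ • ∫ x, (integrand)
    have hpull : (∫ y, t ^ (-((N : ℝ) / lam)) * (c + b * ‖y‖ ^ q) ^ m
        * φ ((t ^ (1/lam)) • y))
        = t ^ (-((N : ℝ) / lam)) * ∫ y, f₀ y * φ ((t ^ (1/lam)) • y) := by
      rw [← integral_const_mul]
      congr 1
      funext y
      rw [hf₀_def]
      ring
    rw [hpull] at h
    have hRN : ((t ^ (1/lam)) ^ (N:ℕ) : ℝ) = t ^ ((N:ℝ)/lam) := by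
      rw [← Real.rpow_natCast (t ^ (1/lam)) N, ← Real.rpow_mul ht.le]
      congr 1
      field_simp
    have htne : (t:ℝ) ^ ((N:ℝ)/lam) ≠ 0 := (Real.rpow_pos_of_pos ht _).ne'
    have hta : t ^ (-((N : ℝ) / lam)) = (t ^ ((N:ℝ)/lam))⁻¹ := by
      rw [← Real.rpow_neg_one (t ^ ((N:ℝ)/lam)), ← Real.rpow_mul ht.le]
      congr 1; ring
    rw [hRN, smul_eq_mul, hta] at h
    rw [hta]
    exact (mul_left_cancel₀ (inv_ne_zero htne) h).symm
  have h_lim : Tendsto (fun t : ℝ => ∫ y, f₀ y * φ ((t ^ ((1:ℝ)/lam)) • y))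
      (nhdsWithin 0 (Ioi (0:ℝ))) (nhds (∫ y, f₀ y * φ 0)) := by
    apply tendsto_integral_filter_of_dominated_convergence (bound := fun y => f₀ y * K)
    · exact Eventually.of_forall fun t =>
        (Continuous.aestronglyMeasurable (f := fun a => f₀ a * φ (t ^ (1 / lam) • a))
          (hcont.mul (hφ.comp (continuous_const_smul (t ^ (1 / lam))))))
    · refine Eventually.of_forall fun t => Eventually.of_forall fun y => ?_
      rw [Real.norm_eq_abs, abs_mul, abs_of_pos (hf₀pos y)]
      exact mul_le_mul_of_nonneg_left (hK _) (hf₀pos y).le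
    · exact hint.mul_const K
    · refine Eventually.of_forall fun y => ?_
      apply Tendsto.const_mul
      have h1 : Tendsto (fun t : ℝ => t ^ ((1:ℝ)/lam)) (nhdsWithin 0 (Ioi (0:ℝ))) (nhds 0) := by
        have hca : ContinuousAt (fun s : ℝ => s ^ ((1:ℝ)/lam)) 0 :=
          Real.continuousAt_rpow_const 0 ((1:ℝ)/lam) (Or.inr hbv.le)
        have h0 := hca.tendsto
        rw [Real.zero_rpow hbv.ne'] at h0
        exact h0.mono_left nhdsWithin_le_nhds
      have h2 : Tendsto (fun t : ℝ => (t ^ ((1:ℝ)/lam)) • y) (nhdsWithin 0 (Ioi (0:ℝ)))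
          (nhds ((0:ℝ) • y)) := h1.smul_const y
      rw [zero_smul] at h2
      exact (hφ.continuousAt.tendsto).comp h2
  have hval : (∫ y, f₀ y * φ 0) = M * φ 0 := by
    rw [integral_mul_const]
    congr 1
  rw [hval] at h_lim
  apply Tendsto.congr' _ h_lim
  filter_upwards [self_mem_nhdsWithin] with t ht
  exact (h_cv t ht).symm

/-- Barenblatt solutions of the singular supercritical parabolic `p`-Laplace equation,
`2N/(N+1) < p < 2` (so that `λ = N(p-2) + p > 0`): there exist `a, b > 0` depending only
on `N` and `p` such that for each mass `M > 0` the Barenblatt profile solves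
`∂ₜ B = div(‖∇B‖^{p-2} ∇B)` pointwise away from `x = 0`, and `B(·, t) ⇀ M δ₀`
as `t → 0⁺`. -/
theorem barenblatt_singular (N : ℕ) (hN : 1 ≤ N) (p : ℝ)
    (hp₁ : 2 * (N : ℝ) / ((N : ℝ) + 1) < p) (hp₂ : p < 2) :
    (0 : ℝ) < (N : ℝ) * (p - 2) + p ∧
    ∃ a : ℝ, 0 < a ∧ ∃ b : ℝ, 0 < b ∧
      ∀ M : ℝ, 0 < M →
        -- (i) the equation holds pointwise away from the origin
        (∀ (x : EuclideanSpace ℝ (Fin N)) (t : ℝ), 0 < t → x ≠ 0 →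
          DifferentiableAt ℝ (pFlux p (fun z => barenblattSing N p a b M z t)) x ∧
            deriv (fun s => barenblattSing N p a b M x s) t =
              divergence (pFlux p (fun z => barenblattSing N p a b M z t)) x) ∧
        -- (ii) the initial datum is `M δ₀` in the sense of measures
        (∀ φ : EuclideanSpace ℝ (Fin N) → ℝ, Continuous φ → (∃ K : ℝ, ∀ x, |φ x| ≤ K) →
          Tendsto (fun t => ∫ x, barenblattSing N p a b M x t * φ x)
            (nhdsWithin 0 (Ioi (0 : ℝ))) (nhds (M * φ 0))) := by
  obtain ⟨hp1, hlam⟩ := param_facts N hN p hp₁ hp₂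
  have hp1' : (0:ℝ) < p - 1 := by linarith
  have hp2' : (0:ℝ) < 2 - p := by linarith
  have hppos : (0:ℝ) < p := by linarith
  have hpm2 : p - 2 ≠ 0 := by linarith
  have hI1 : 0 < I1 N p := I1_pos N hN p hp₁ hp₂
  set b : ℝ := (2 - p) / p * ((N : ℝ) * (p - 2) + p) ^ (-(1 : ℝ) / (p - 1)) with hb_def
  have hbpos : 0 < b := by
    rw [hb_def]
    have : (0:ℝ) < ((N : ℝ) * (p - 2) + p) ^ (-(1 : ℝ) / (p - 1)) :=
      Real.rpow_pos_of_pos hlam _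
    positivity
  set θ : ℝ := (N:ℝ)*(p-1)/p + (p-1)/(p-2) with hθ_def
  have hθkey : θ * (p*(p-2)) = (p-1) * ((N:ℝ)*(p-2)+p) := by
    rw [hθ_def]; field_simp
  have hθneg : θ < 0 := by
    have h1 : (0:ℝ) < (p-1) * ((N:ℝ)*(p-2)+p) := mul_pos hp1' hlam
    have h2 : p * (p-2) < 0 := mul_neg_of_pos_of_neg hppos (by linarith)
    nlinarith
  set a : ℝ := ((b ^ ((N:ℝ)*(p-1)/p)) / I1 N p) ^ θ⁻¹ with ha_def
  have hbe : (0:ℝ) < b ^ ((N:ℝ)*(p-1)/p) := Real.rpow_pos_of_pos hbpos _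
  have ha : 0 < a := Real.rpow_pos_of_pos (by positivity) _
  refine ⟨hlam, a, ha, b, hbpos, fun M hM => ?_⟩
  have hc : 0 < a * M ^ (p * (p - 2) / (((N : ℝ) * (p - 2) + p) * (p - 1))) := by
    have : (0:ℝ) < M ^ (p * (p - 2) / (((N : ℝ) * (p - 2) + p) * (p - 1))) :=
      Real.rpow_pos_of_pos hM _
    positivity
  constructor
  · intro x t ht hx
    have h := pde_main N hN p hp₁ hp₂
      (a * M ^ (p * (p - 2) / (((N : ℝ) * (p - 2) + p) * (p - 1)))) hc b hb_def x t ht hx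
    simpa only [barenblattSing] using h
  · rintro φ hφ ⟨K, hK⟩
    -- mass identity
    have hmass : (∫ y : EuclideanSpace ℝ (Fin N),
        ((a * M ^ (p * (p - 2) / (((N : ℝ) * (p - 2) + p) * (p - 1))))
          + b * ‖y‖ ^ (p / (p-1))) ^ ((p-1)/(p-2))) = M := by
      set c : ℝ := a * M ^ (p * (p - 2) / (((N : ℝ) * (p - 2) + p) * (p - 1))) with hc_def
      rw [profile_scaling N p hp1 hp₂ hc hbpos]
      have e1 : ((c/b) ^ ((p-1)/p)) ^ (N : ℕ) = (c/b) ^ ((N:ℝ)*(p-1)/p) := by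
        rw [← Real.rpow_natCast ((c/b) ^ ((p-1)/p)) N,
          ← Real.rpow_mul (by positivity : (0:ℝ) ≤ c/b)]
        congr 1; ring
      have e2 : (c/b) ^ ((N:ℝ)*(p-1)/p) = c ^ ((N:ℝ)*(p-1)/p) / b ^ ((N:ℝ)*(p-1)/p) :=
        Real.div_rpow hc.le hbpos.le _
      have e3 : c ^ ((N:ℝ)*(p-1)/p) * c ^ ((p-1)/(p-2)) = c ^ θ := by
        rw [← Real.rpow_add hc, hθ_def]
      have e4 : c ^ θ = a ^ θ * M := by
        rw [hc_def, Real.mul_rpow ha.le (Real.rpow_nonneg hM.le _),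
          ← Real.rpow_mul hM.le,
          show (p * (p - 2) / (((N : ℝ) * (p - 2) + p) * (p - 1))) * θ = 1 by
            rw [div_mul_eq_mul_div, div_eq_one_iff_eq (mul_pos hlam hp1').ne']; linear_combination hθkey,
          Real.rpow_one]
      have e5 : a ^ θ = b ^ ((N:ℝ)*(p-1)/p) / I1 N p := by
        rw [ha_def, ← Real.rpow_mul (by positivity : (0:ℝ) ≤ b ^ ((N:ℝ)*(p-1)/p) / I1 N p),
          inv_mul_cancel₀ hθneg.ne, Real.rpow_one]
      calc ((c/b) ^ ((p-1)/p)) ^ (N : ℕ) * (c ^ ((p-1)/(p-2)) * I1 N p)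
          = (c ^ ((N:ℝ)*(p-1)/p) * c ^ ((p-1)/(p-2))) * I1 N p / b ^ ((N:ℝ)*(p-1)/p) := by
            rw [e1, e2]; ring
        _ = (a ^ θ * M) * I1 N p / b ^ ((N:ℝ)*(p-1)/p) := by rw [e3, e4]
        _ = M := by
            rw [e5]; field_simp
    have h := limit_main N hN p hp₁ hp₂
      (a * M ^ (p * (p - 2) / (((N : ℝ) * (p - 2) + p) * (p - 1)))) b M hc hbpos hmass φ hφ K hK
    simpa only [barenblattSing] using h
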